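/- Let S = ⟨n₁, …, n_k⟩ be a numerical monoid with minimal generators n₁ < n₂ < ⋯ < n_k. For every x ∈ S with x > n_{k−1}·n_k, one has ℓ(x + n_k) = ℓ(x) + 1, where ℓ denotes minimum factorization length. -/

import Mathlib

/-- The numerical monoid generated by `n 0, …, n (k-1)`. -/
def NumMon {k : ℕ} (n : Fin k → ℕ) : Set ℕ := {x | ∃ c : Fin k → ℕ, ∑ i, c i * n i = x}

/-- The generating set is minimal: no generator lies in the submonoid
generated by the remaining generators. -/
def MinimalGens {k : ℕ} (n : Fin k → ℕ) : Prop :=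
  ∀ i, ¬ ∃ c : Fin k → ℕ, c i = 0 ∧ ∑ j, c j * n j = n i

/-- The set of factorization lengths of `x`. -/
def GLenSet {k : ℕ} (n : Fin k → ℕ) (x : ℕ) : Set ℕ :=
  {l | ∃ c : Fin k → ℕ, ∑ i, c i * n i = x ∧ ∑ i, c i = l}

/-- Minimum factorization length. -/
noncomputable def GLmin {k : ℕ} (n : Fin k → ℕ) (x : ℕ) : ℕ := sInf (GLenSet n x)

set_option maxHeartbeats 1000000


lemma aux_sum_min (Z : ℕ → ℕ) (m : ℕ) : ∀ (j : ℕ), ∑ i ∈ Finset.range m, min (Z i) (j - ∑ i' ∈ Finset.range i, Z i') = min j (∑ i ∈ Finset.range m, Z i) := by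
  induction m with
  | zero => simp
  | succ m ih =>
    intro j
    rw [Finset.sum_range_succ, ih, Finset.sum_range_succ]
    omega

lemma aux_ite_mul {k : ℕ} (K : Fin k) (n : Fin k → ℕ) (m : ℕ) :
    ∑ i : Fin k, (if i = K then m else 0) * n i = m * n K := by
  simp [ite_mul]

lemma aux_ite_sum {k : ℕ} (K : Fin k) (m : ℕ) :
    ∑ i : Fin k, (if i = K then m else 0) = m := by
  simp

lemma exchange_lemma {k : ℕ} (hk : 2 ≤ k) (n : Fin k → ℕ) (hpos : ∀ i, 0 < n i)
    (hmono : StrictMono n) (y : ℕ) (z : Fin k → ℕ) (hzv : ∑ i, z i * n i = y)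
    (hzK : z ⟨k - 1, by omega⟩ = 0) (hL : n ⟨k - 1, by omega⟩ < ∑ i, z i) :
    ∃ c : Fin k → ℕ, ∑ i, c i * n i = y ∧ ∑ i, c i < ∑ i, z i := by
  set K : Fin k := ⟨k - 1, by omega⟩ with hKdef
  set J : Fin k := ⟨k - 2, by omega⟩ with hJdef
  have hJK : n J < n K := hmono (by simp [hJdef, hKdef, Fin.lt_def]; omega)
  obtain ⟨N, hNdef⟩ : ∃ N : ℕ → ℕ , N = fun i => if h : i < k then n ⟨i, h⟩ else 0 := ⟨_, rfl⟩
  obtain ⟨Z, hZdef⟩ : ∃ Z : ℕ → ℕ , Z = fun i => if h : i < k then z ⟨i, h⟩ else 0 := ⟨_, rfl⟩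
  have hN : ∀ i : Fin k, N i.val = n i := fun i => by simp [hNdef]
  have hZ : ∀ i : Fin k, Z i.val = z i := fun i => by simp [hZdef]
  have hN1 : ∀ i ∈ Finset.range k, 1 ≤ N i := by
    intro i hi
    rw [Finset.mem_range] at hi
    simpa [hNdef, hi] using Nat.one_le_iff_ne_zero.mpr (hpos ⟨i, hi⟩).ne'
  have hconv : ∀ (F : ℕ → ℕ) (f : Fin k → ℕ), (∀ i : Fin k, F i.val = f i) →
      ∑ i ∈ Finset.range k, F i = ∑ i : Fin k, f i := by
    intro F f h
    rw [← Fin.sum_univ_eq_sum_range F k]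
    exact Finset.sum_congr rfl (fun i _ => h i)
  have hzv' : ∑ i ∈ Finset.range k, Z i * N i = y := by
    rw [hconv (fun i => Z i * N i) (fun i => z i * n i)
      (fun i => show Z i.val * N i.val = z i * n i by rw [hZ, hN])]
    exact hzv
  have hzl' : ∑ i ∈ Finset.range k, Z i = ∑ i, z i := hconv Z z hZ
  -- prefix-cutting function
  obtain ⟨u, hudef⟩ : ∃ u : ℕ → ℕ → ℕ , u = fun j i => min (Z i) (j - ∑ i' ∈ Finset.range i, Z i') := ⟨_, rfl⟩
  have husum : ∀ j, ∑ i ∈ Finset.range k, u j i = min j (∑ i, z i) := by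
    intro j; rw [hudef]; rw [aux_sum_min Z k j, hzl']
  have humono : ∀ p q, p ≤ q → ∀ i, u p i ≤ u q i := by
    intro p q h i
    rw [hudef]
    exact min_le_min le_rfl (Nat.sub_le_sub_right h _)
  have huZ : ∀ j i, u j i ≤ Z i := fun j i => by rw [hudef]; exact min_le_left _ _
  obtain ⟨V, hVdef⟩ : ∃ V : ℕ → ℕ , V = fun j => ∑ i ∈ Finset.range k, u j i * N i := ⟨_, rfl⟩
  -- pigeonhole on residues
  have hpig : ∃ p q, p < q ∧ q ≤ n K ∧ V p % n K = V q % n K := by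
    obtain ⟨a, ha, b, hb, hab, hV⟩ :=
      Finset.exists_ne_map_eq_of_card_lt_of_maps_to
        (s := Finset.range (n K + 1)) (t := Finset.range (n K))
        (by simp) (fun a _ => Finset.mem_range.mpr (Nat.mod_lt _ (hpos K)))
    rw [Finset.mem_range] at ha hb
    rcases hab.lt_or_gt with h | h
    · exact ⟨a, b, h, by omega, hV⟩
    · exact ⟨b, a, h, by omega, hV.symm⟩
  obtain ⟨p, q, hpq, hqK, hmod⟩ := hpig
  have hSK : n K < ∑ i, z i := hL
  have hup : ∑ i ∈ Finset.range k, u p i = p := by rw [husum]; omega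
  have huq : ∑ i ∈ Finset.range k, u q i = q := by rw [husum]; omega
  obtain ⟨t, htdef⟩ : ∃ t : ℕ → ℕ , t = fun i => u q i - u p i := ⟨_, rfl⟩
  have ht1 : ∀ i, u p i + t i = u q i := fun i => by rw [htdef]; exact Nat.add_sub_cancel' (humono p q hpq.le i)
  have ht_sum : ∑ i ∈ Finset.range k, t i = q - p := by
    have h2 : (∑ i ∈ Finset.range k, u p i) + ∑ i ∈ Finset.range k, t i
        = ∑ i ∈ Finset.range k, u q i := by
      rw [← Finset.sum_add_distrib]
      exact Finset.sum_congr rfl (fun i _ => ht1 i)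
    omega
  have htV : V p + ∑ i ∈ Finset.range k, t i * N i = V q := by
    rw [hVdef, ← Finset.sum_add_distrib]
    exact Finset.sum_congr rfl (fun i _ => by rw [← add_mul, ht1])
  have hVle : V p ≤ V q := by omega
  have hdvd : n K ∣ V q - V p := (Nat.modEq_iff_dvd' hVle).mp hmod
  obtain ⟨m, hm⟩ := hdvd
  have hmval : ∑ i ∈ Finset.range k, t i * N i = n K * m := by omega
  have htle : q - p ≤ ∑ i ∈ Finset.range k, t i * N i := by
    rw [← ht_sum]
    exact Finset.sum_le_sum (fun i hi => Nat.le_mul_of_pos_right _ (hN1 i hi))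
  have hm1 : 1 ≤ m := by
    rcases Nat.eq_zero_or_pos m with h | h
    · subst h; omega
    · exact h
  -- each used part is at most n J
  have htZ : ∀ i, t i ≤ Z i := by
    intro i
    have h1 := huZ q i
    have h2 : t i ≤ u q i := by simp only [htdef]; omega
    omega
  have htJ : ∀ i ∈ Finset.range k, t i * N i ≤ t i * n J := by
    intro i hi
    rcases Nat.eq_zero_or_pos (t i) with h | h
    · simp [h]
    · have hik := Finset.mem_range.mp hi
      have hZK0 : Z (k - 1) = 0 := (hZ K).trans hzK
      have hiK : i ≠ k - 1 := by
        intro he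
        subst he
        have := htZ (k - 1)
        omega
      have hNJ : N i ≤ n J := by
        rw [show N i = n ⟨i, hik⟩ from by simp [hNdef, hik]]
        exact hmono.monotone (by simp [hJdef, Fin.le_def]; omega)
      exact Nat.mul_le_mul_left _ hNJ
  have hmlt : m < q - p := by
    have h1 : ∑ i ∈ Finset.range k, t i * N i ≤ (q - p) * n J := by
      calc ∑ i ∈ Finset.range k, t i * N i ≤ ∑ i ∈ Finset.range k, t i * n J :=
            Finset.sum_le_sum htJ
        _ = (q - p) * n J := by rw [← Finset.sum_mul, ht_sum]
      
    have h2 : n K * m < n K * (q - p) := by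
      calc n K * m = ∑ i ∈ Finset.range k, t i * N i := hmval.symm
        _ ≤ (q - p) * n J := h1
        _ < (q - p) * n K := mul_lt_mul_of_pos_left hJK (by omega)
        _ = n K * (q - p) := Nat.mul_comm _ _
    exact Nat.lt_of_mul_lt_mul_left h2
  -- transfer t to Fin k
  obtain ⟨T, hTdef⟩ : ∃ T : Fin k → ℕ , T = fun i => t i.val := ⟨_, rfl⟩
  have hTz : ∀ i : Fin k, T i ≤ z i := by
    intro i
    have := huZ q i.val
    have := hZ i
    simp only [hTdef, htdef]
    omega
  have hTsum : ∑ i : Fin k, T i = q - p := by rw [← hconv t T (fun i => by rw [hTdef]), ht_sum]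
  have hTval : ∑ i : Fin k, T i * n i = n K * m := by
    rw [← hconv (fun i => t i * N i) (fun i => T i * n i) (fun i => show t i.val * N i.val = T i * n i by rw [hN, hTdef]), hmval]
  -- the shorter factorization
  refine ⟨fun i => (z i - T i) + if i = K then m else 0, ?_, ?_⟩
  · have hsplit : ∑ i : Fin k, ((z i - T i) + if i = K then m else 0) * n i
        = (∑ i : Fin k, (z i - T i) * n i) + m * n K := by
      simp only [add_mul, Finset.sum_add_distrib]
      rw [aux_ite_mul]
    have hA : (∑ i : Fin k, (z i - T i) * n i) + n K * m = y := by
      rw [← hTval, ← Finset.sum_add_distrib]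
      rw [← hzv]
      exact Finset.sum_congr rfl (fun i _ => by rw [← add_mul, Nat.sub_add_cancel (hTz i)])
    rw [hsplit, Nat.mul_comm m (n K)]; omega
  · have hsplit : ∑ i : Fin k, ((z i - T i) + if i = K then m else 0)
        = (∑ i : Fin k, (z i - T i)) + m := by
      rw [Finset.sum_add_distrib, aux_ite_sum]
    have hA : (∑ i : Fin k, (z i - T i)) + (q - p) = ∑ i, z i := by
      rw [← hTsum, ← Finset.sum_add_distrib]
      exact Finset.sum_congr rfl (fun i _ => Nat.sub_add_cancel (hTz i))
    rw [hsplit]; omega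

theorem numerical_monoid_min_length_quasilinear {k : ℕ} (hk : 2 ≤ k)
    (n : Fin k → ℕ) (hpos : ∀ i, 0 < n i) (hmono : StrictMono n)
    (hmin : MinimalGens n) (x : ℕ) (hx : x ∈ NumMon n)
    (hbig : n ⟨k - 2, by omega⟩ * n ⟨k - 1, by omega⟩ < x) :
    GLmin n (x + n ⟨k - 1, by omega⟩) = GLmin n x + 1 := by
  set K : Fin k := ⟨k - 1, by omega⟩ with hKdef
  set J : Fin k := ⟨k - 2, by omega⟩ with hJdef
  show GLmin n (x + n K) = GLmin n x + 1
  rw [show GLmin n (x + n K) = sInf (GLenSet n (x + n K)) from rfl,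
      show GLmin n x = sInf (GLenSet n x) from rfl]
  have hbig' : n J * n K < x := hbig
  obtain ⟨c0, hc0⟩ := hx
  have hKpos : 0 < n K := hpos K
  have hJK : n J < n K := hmono (by simp [hJdef, hKdef, Fin.lt_def]; omega)
  have hxne : (GLenSet n x).Nonempty := ⟨∑ i, c0 i, c0, hc0, rfl⟩
  obtain ⟨c1, hc1v, hc1l⟩ := Nat.sInf_mem hxne
  have hyne : (GLenSet n (x + n K)).Nonempty := by
    refine ⟨(∑ i, c0 i) + 1, fun i => c0 i + if i = K then 1 else 0, ?_, ?_⟩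
    · simp only [add_mul, Finset.sum_add_distrib, hc0, aux_ite_mul, one_mul]
    · simp only [Finset.sum_add_distrib, aux_ite_sum]
  obtain ⟨z, hzv, hzl⟩ := Nat.sInf_mem hyne
  have hupper : sInf (GLenSet n (x + n K)) ≤ sInf (GLenSet n x) + 1 := by
    apply Nat.sInf_le
    refine ⟨fun i => c1 i + if i = K then 1 else 0, ?_, ?_⟩
    · simp only [add_mul, Finset.sum_add_distrib, hc1v, aux_ite_mul, one_mul]
    · simp only [Finset.sum_add_distrib, aux_ite_sum, hc1l]
  have hlower : sInf (GLenSet n x) + 1 ≤ sInf (GLenSet n (x + n K)) := by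
    rcases Nat.eq_zero_or_pos (z K) with hzK | hzK
    · exfalso
      have hbound : x + n K ≤ (∑ i, z i) * n J := by
        rw [← hzv]
        calc ∑ i, z i * n i ≤ ∑ i, z i * n J := by
              apply Finset.sum_le_sum
              intro i _
              rcases Nat.eq_zero_or_pos (z i) with h | h
              · simp [h]
              · have hiK : (i : ℕ) ≠ k - 1 := by
                  intro hv
                  rw [show i = K from Fin.ext hv] at h
                  omega
                have hile : i ≤ J := by
                  rw [Fin.le_def]
                  show (i : ℕ) ≤ k - 2
                  have := i.isLt
                  omega
                exact Nat.mul_le_mul_left _ (hmono.monotone hile)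
          _ = (∑ i, z i) * n J := (Finset.sum_mul _ _ _).symm
      have hSgt : n K < ∑ i, z i := by
        by_contra hcon
        push_neg at hcon
        have h1 : (∑ i, z i) * n J ≤ n K * n J := Nat.mul_le_mul_right _ hcon
        have h2 : n K * n J = n J * n K := Nat.mul_comm _ _
        omega
      obtain ⟨c, hcv, hcl⟩ := exchange_lemma hk n hpos hmono (x + n K) z hzv hzK hSgt
      have hle := Nat.sInf_le (show (∑ i, c i) ∈ GLenSet n (x + n K) from ⟨c, hcv, rfl⟩)
      omega
    · have key : ∀ i : Fin k,
          (z i - if i = K then 1 else 0) * n i + (if i = K then 1 else 0) * n i = z i * n i := by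
        intro i
        rw [← add_mul, Nat.sub_add_cancel]
        split
        · next h => rw [h]; omega
        · exact Nat.zero_le _
      have h1 : (∑ i, (z i - if i = K then 1 else 0) * n i) + 1 * n K = ∑ i, z i * n i := by
        rw [← aux_ite_mul K n 1, ← Finset.sum_add_distrib]
        exact Finset.sum_congr rfl (fun i _ => key i)
      rw [one_mul] at h1
      have hxval : ∑ i, (z i - if i = K then 1 else 0) * n i = x := by omega
      have hlen1 : (∑ i, (z i - if i = K then 1 else 0)) + 1 = ∑ i, z i := by
        have h2 : (∑ i, ((z i - if i = K then 1 else 0) + if i = K then 1 else 0))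
            = ∑ i, z i := by
          refine Finset.sum_congr rfl (fun i _ => Nat.sub_add_cancel ?_)
          split
          · next h => rw [h]; omega
          · exact Nat.zero_le _
        rw [Finset.sum_add_distrib, aux_ite_sum] at h2
        exact h2
      have hle : sInf (GLenSet n x) ≤ ∑ i, (z i - if i = K then 1 else 0) :=
        Nat.sInf_le (show _ ∈ GLenSet n x from ⟨_, hxval, rfl⟩)
      omega
  omega
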